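/- Pythagorean inequality for Bregman projections onto convex sets: let f : ℝ^d → ℝ be differentiable and strictly convex, S ⊆ ℝ^d a closed convex set, q ∈ ℝ^d, and let p' ∈ S be the minimizer of B_f(·, q) over S. Then for every p ∈ S, B_f(p, q) ≥ B_f(p, p') + B_f(p', q). -/
import Mathlib

open Real
open scoped InnerProductSpace

/-- Pythagorean inequality for Bregman projections onto closed convex sets:
if `p' ∈ S` minimizes the Bregman divergence `B_f(·, q)` of a differentiable strictly
convex `f` over a closed convex `S`, then `B_f(p,q) ≥ B_f(p,p') + B_f(p',q)` for `p ∈ S`. -/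
theorem stmt_9 {d : ℕ} (f : EuclideanSpace ℝ (Fin d) → ℝ)
    (f' : EuclideanSpace ℝ (Fin d) → EuclideanSpace ℝ (Fin d))
    (hf : StrictConvexOn ℝ Set.univ f)
    (hf' : ∀ x, HasGradientAt f (f' x) x)
    (S : Set (EuclideanSpace ℝ (Fin d))) (hSc : IsClosed S) (hScv : Convex ℝ S)
    (q p' : EuclideanSpace ℝ (Fin d)) (hp'S : p' ∈ S)
    (hmin : ∀ p ∈ S, f p' - f q - ⟪f' q, p' - q⟫_ℝ ≤ f p - f q - ⟪f' q, p - q⟫_ℝ) :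
    ∀ p ∈ S, f p - f q - ⟪f' q, p - q⟫_ℝ ≥
      (f p - f p' - ⟪f' p', p - p'⟫_ℝ) + (f p' - f q - ⟪f' q, p' - q⟫_ℝ) := by
  intro p hpS
  -- auxiliary function g x = f x - ⟪f' q, x⟫
  set g : EuclideanSpace ℝ (Fin d) → ℝ := fun x => f x - ⟪f' q, x⟫_ℝ with hg
  have hmin' : IsMinOn g S p' := by
    intro x hx
    have := hmin x hx
    simp only [inner_sub_right] at this
    simp only [g, Set.mem_setOf_eq]
    linarith
  have hG : HasFDerivAt g
      ((InnerProductSpace.toDual ℝ _ (f' p')) - innerSL ℝ (f' q)) p' := by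
    exact ((hf' p').hasFDerivAt).sub ((innerSL ℝ (f' q)).hasFDerivAt)
  have hy : p - p' ∈ posTangentConeAt S p' :=
    sub_mem_posTangentConeAt_of_segment_subset (hScv.segment_subset hp'S hpS)
  have hkey : 0 ≤ ((InnerProductSpace.toDual ℝ _ (f' p')) - innerSL ℝ (f' q)) (p - p') :=
    hmin'.localize.hasFDerivWithinAt_nonneg hG.hasFDerivWithinAt hy
  have hkey' : 0 ≤ ⟪f' p', p - p'⟫_ℝ - ⟪f' q, p - p'⟫_ℝ := by
    simpa using hkey
  have h1 : ⟪f' q, p - q⟫_ℝ = ⟪f' q, p - p'⟫_ℝ + ⟪f' q, p' - q⟫_ℝ := by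
    rw [← inner_add_right, sub_add_sub_cancel]
  rw [ge_iff_le, h1]
  linarith
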